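/- Let α > 0, let A be a finite set of m×m matrices with nonnegative real entries, let v ∈ (ℝ≥0)^m, and let X ⊆ (ℝ≥0)^m be a bounded set of vectors such that v ∈ conv(X) and for every x ∈ X and M ∈ A, (1/α)·M·x ∈ conv(X). Then for every p ∈ (ℝ≥0)^m there is a constant C such that for all n and every sequence M₁,…,Mₙ of matrices in A, |p · (M₁⋯Mₙ · v)| < C·αⁿ. -/

import Mathlib

open Matrix

theorem convexHull_matrix_bound (m : ℕ) (α : ℝ) (hα : 0 < α)
    (A : Finset (Matrix (Fin m) (Fin m) ℝ))
    (hA : ∀ M ∈ A, ∀ i j, 0 ≤ M i j)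
    (v : Fin m → ℝ) (hv : ∀ i, 0 ≤ v i)
    (X : Set (Fin m → ℝ)) (hXnn : ∀ x ∈ X, ∀ i, 0 ≤ x i)
    (hXbdd : Bornology.IsBounded X)
    (hvX : v ∈ convexHull ℝ X)
    (hstep : ∀ x ∈ X, ∀ M ∈ A, α⁻¹ • (M *ᵥ x) ∈ convexHull ℝ X)
    (p : Fin m → ℝ) (hp : ∀ i, 0 ≤ p i) :
    ∃ C : ℝ, ∀ (n : ℕ) (M : Fin n → Matrix (Fin m) (Fin m) ℝ),
      (∀ i, M i ∈ A) → |p ⬝ᵥ ((List.ofFn M).prod *ᵥ v)| < C * α ^ n := by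
  -- Step: convex hull is stable under x ↦ α⁻¹ • (M *ᵥ x)
  have hstep' : ∀ M ∈ A, ∀ y ∈ convexHull ℝ X,
      α⁻¹ • (M *ᵥ y) ∈ convexHull ℝ X := by
    intro M hM
    have hconv : Convex ℝ ((α⁻¹ • M.mulVecLin) ⁻¹' (convexHull ℝ X)) :=
      (convex_convexHull ℝ X).linear_preimage (α⁻¹ • M.mulVecLin)
    have hsub : convexHull ℝ X ⊆ (α⁻¹ • M.mulVecLin) ⁻¹' (convexHull ℝ X) :=
      convexHull_min (fun x hx => hstep x hx M hM) hconv
    intro y hy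
    simpa using hsub hy
  -- key invariant
  have key : ∀ (n : ℕ) (M : Fin n → Matrix (Fin m) (Fin m) ℝ),
      (∀ i, M i ∈ A) →
      (α⁻¹) ^ n • ((List.ofFn M).prod *ᵥ v) ∈ convexHull ℝ X := by
    intro n
    induction n with
    | zero => intro M _; simpa using hvX
    | succ n ih =>
      intro M hM
      have h0 : (List.ofFn M).prod = M 0 * (List.ofFn fun i => M i.succ).prod := by
        rw [List.ofFn_succ, List.prod_cons]
      have ih' := ih (fun i => M i.succ) (fun i => hM i.succ)
      have := hstep' (M 0) (hM 0) _ ih'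
      have heq : α⁻¹ • (M 0 *ᵥ ((α⁻¹) ^ n • ((List.ofFn fun i => M i.succ).prod *ᵥ v)))
          = (α⁻¹) ^ (n + 1) • ((List.ofFn M).prod *ᵥ v) := by
        rw [h0, ← Matrix.mulVec_mulVec, Matrix.mulVec_smul, smul_smul, pow_succ']
      rwa [heq] at this
  -- boundedness of convex hull
  have hbdd : Bornology.IsBounded (convexHull ℝ X) := isBounded_convexHull.mpr hXbdd
  obtain ⟨R, hR⟩ := hbdd.subset_ball_lt 0 0
  refine ⟨m * ‖p‖ * R + 1, ?_⟩
  intro n M hM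
  have hy := key n M hM
  set w := (List.ofFn M).prod *ᵥ v with hw
  have hyball := hR.2 hy
  have hynorm : ‖(α⁻¹) ^ n • w‖ < R := by
    simpa [Metric.mem_ball] using hyball
  have hdot : |p ⬝ᵥ ((α⁻¹) ^ n • w)| ≤ m * ‖p‖ * R := by
    have h1 : |p ⬝ᵥ ((α⁻¹) ^ n • w)| ≤ ∑ i, |p i| * |((α⁻¹) ^ n • w) i| := by
      refine (Finset.abs_sum_le_sum_abs _ _).trans ?_
      apply Finset.sum_le_sum
      intro i _
      simp [abs_mul]
    refine h1.trans ?_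
    have h2 : ∀ i : Fin m, |p i| * |((α⁻¹) ^ n • w) i| ≤ ‖p‖ * R := by
      intro i
      have hpi : |p i| ≤ ‖p‖ := by
        simpa using norm_le_pi_norm p i
      have hwi : |((α⁻¹) ^ n • w) i| ≤ R := by
        have := norm_le_pi_norm ((α⁻¹) ^ n • w) i
        simp only [Real.norm_eq_abs] at this
        exact this.trans hynorm.le
      exact mul_le_mul hpi hwi (abs_nonneg _) (norm_nonneg _)
    calc ∑ i, |p i| * |((α⁻¹) ^ n • w) i| ≤ ∑ _i : Fin m, ‖p‖ * R :=
          Finset.sum_le_sum fun i _ => h2 i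
      _ = m * ‖p‖ * R := by simp [mul_assoc]
  have hαn : (0:ℝ) < α ^ n := pow_pos hα n
  have hsmul : p ⬝ᵥ w = α ^ n * (p ⬝ᵥ ((α⁻¹) ^ n • w)) := by
    rw [dotProduct_smul, smul_eq_mul]
    rw [← mul_assoc, ← mul_pow, mul_inv_cancel₀ hα.ne', one_pow, one_mul]
  rw [hsmul, abs_mul, abs_of_pos hαn, mul_comm]
  have : m * ‖p‖ * R < m * ‖p‖ * R + 1 := by linarith
  exact mul_lt_mul_of_pos_right (lt_of_le_of_lt hdot this) hαn
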